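/- Each Lagrange interpolation polynomial of type A, f_r(a₁,a₂;t;z), is a symmetric polynomial in z = (z₁,…,z_n): for every permutation σ ∈ S_n, f_r(a₁,a₂;t; z_{σ(1)},…,z_{σ(n)}) = f_r(a₁,a₂;t; z₁,…,z_n). -/

import Mathlib

open scoped BigOperators

/-- The k-th element (0-indexed) of a finite set of naturals, listed increasingly. -/
def sortedEl (I : Finset ℕ) (k : ℕ) : ℕ := (I.sort (· ≤ ·)).getD k 0

/-- The Lagrange interpolation polynomial of type A:
f_r(a₁,a₂;t;z) = ∑_{I⊆{1,…,n},|I|=r} ∏_{k=1}^{r}(z_{i_k}−a₂t^{i_k−k})/(a₁t^{k−1}−a₂t^{i_k−k})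
  ∏_{l=1}^{n−r}(z_{j_l}−a₁t^{j_l−l})/(a₂t^{l−1}−a₁t^{j_l−l}),
where I = {i₁<⋯<i_r} and {1,…,n}∖I = {j₁<⋯<j_{n−r}}; z is indexed by 1,…,n. -/
noncomputable def lagrangeF (a₁ a₂ t : ℂ) (n r : ℕ) (z : ℕ → ℂ) : ℂ :=
  ∑ I ∈ Finset.powersetCard r (Finset.Icc 1 n),
    (∏ k ∈ Finset.range r,
        (z (sortedEl I k) - a₂ * t ^ (sortedEl I k - (k + 1))) /
          (a₁ * t ^ k - a₂ * t ^ (sortedEl I k - (k + 1)))) *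
      ∏ l ∈ Finset.range (n - r),
        (z (sortedEl ((Finset.Icc 1 n) \ I) l) -
            a₁ * t ^ (sortedEl ((Finset.Icc 1 n) \ I) l - (l + 1))) /
          (a₂ * t ^ l - a₁ * t ^ (sortedEl ((Finset.Icc 1 n) \ I) l - (l + 1)))



/-- rank: number of elements of S that are ≤ m -/
def rk (S : Finset ℕ) (m : ℕ) : ℕ := (S.filter (· ≤ m)).card

lemma sortedEl_eq_get (S : Finset ℕ) (k : ℕ) (hk : k < S.card) :
    sortedEl S k = (S.sort (· ≤ ·)).get ⟨k, by rwa [Finset.length_sort]⟩ := by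
  unfold sortedEl
  rw [List.getD_eq_getElem _ _ (by rwa [Finset.length_sort])]
  simp

lemma sortedEl_mem (S : Finset ℕ) (k : ℕ) (hk : k < S.card) : sortedEl S k ∈ S := by
  rw [sortedEl_eq_get S k hk]
  exact (Finset.mem_sort _).1 (List.get_mem _ ⟨k, by rwa [Finset.length_sort]⟩)

lemma sortedEl_strictMono (S : Finset ℕ) {j k : ℕ} (hjk : j < k) (hk : k < S.card) :
    sortedEl S j < sortedEl S k := by
  rw [sortedEl_eq_get S j (hjk.trans hk), sortedEl_eq_get S k hk]
  exact (S.sortedLT_sort).strictMono_get (by simpa using hjk)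

lemma sortedEl_surj (S : Finset ℕ) {m : ℕ} (hm : m ∈ S) :
    ∃ k, k < S.card ∧ sortedEl S k = m := by
  have h1 : m ∈ S.sort (· ≤ ·) := (Finset.mem_sort _).2 hm
  obtain ⟨⟨k, hk⟩, hget⟩ := List.mem_iff_get.1 h1
  have hk' : k < S.card := by rwa [Finset.length_sort] at hk
  exact ⟨k, hk', by rw [sortedEl_eq_get S k hk']; exact hget⟩

lemma rk_sortedEl (S : Finset ℕ) {k : ℕ} (hk : k < S.card) : rk S (sortedEl S k) = k + 1 := by
  have himg : S.filter (· ≤ sortedEl S k) = (Finset.range (k+1)).image (sortedEl S) := by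
    ext x
    simp only [Finset.mem_filter, Finset.mem_image, Finset.mem_range]
    constructor
    · rintro ⟨hxS, hxle⟩
      obtain ⟨j, hj, rfl⟩ := sortedEl_surj S hxS
      refine ⟨j, ?_, rfl⟩
      by_contra h
      push_neg at h
      have := sortedEl_strictMono S (show k < j by omega) hj
      omega
    · rintro ⟨j, hj, rfl⟩
      have hj' : j < S.card := by omega
      refine ⟨sortedEl_mem S j hj', ?_⟩
      rcases Nat.lt_or_ge j k with h | h
      · exact (sortedEl_strictMono S h hk).le
      · have : j = k := by omega
        subst this; exact le_refl _
  rw [rk, himg, Finset.card_image_of_injOn, Finset.card_range]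
  intro a ha b hb hab
  simp only [Finset.coe_range, Set.mem_Iio] at ha hb
  by_contra hne
  rcases Nat.lt_or_ge a b with h|h
  · exact absurd hab (sortedEl_strictMono S h (by omega)).ne
  · exact absurd hab.symm (sortedEl_strictMono S (show b < a by omega) (by omega)).ne

lemma prod_sortedEl (S : Finset ℕ) (h : ℕ → ℕ → ℂ) :
    ∏ k ∈ Finset.range S.card, h (sortedEl S k) (k+1) = ∏ m ∈ S, h m (rk S m) := by
  refine Finset.prod_bij (fun k _ => sortedEl S k) ?_ ?_ ?_ ?_
  · intro k hk; exact sortedEl_mem S k (Finset.mem_range.1 hk)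
  · intro a ha b hb hab
    simp only [Finset.mem_range] at ha hb
    by_contra hne
    rcases Nat.lt_or_ge a b with h'|h'
    · exact absurd hab (sortedEl_strictMono S h' hb).ne
    · exact absurd hab.symm (sortedEl_strictMono S (show b < a by omega) ha).ne
  · intro m hm
    obtain ⟨k, hk, rfl⟩ := sortedEl_surj S hm
    exact ⟨k, Finset.mem_range.2 hk, rfl⟩
  · intro k hk
    rw [rk_sortedEl S (Finset.mem_range.1 hk)]
noncomputable def Fd (a₁ a₂ t : ℂ) (I : Finset ℕ) (m : ℕ) (x : ℂ) : ℂ :=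
  if m ∈ I then
    (x - a₂ * t ^ (m - rk I m)) / (a₁ * t ^ (rk I m - 1) - a₂ * t ^ (m - rk I m))
  else
    (x - a₁ * t ^ (rk I m)) / (a₂ * t ^ (m - rk I m - 1) - a₁ * t ^ (rk I m))

lemma rk_add_rk_compl {n : ℕ} {I : Finset ℕ} (hsub : I ⊆ Finset.Icc 1 n) {m : ℕ}
    (hm : m ∈ Finset.Icc 1 n) : rk I m + rk (Finset.Icc 1 n \ I) m = m := by
  have hdisj : Disjoint (I.filter (· ≤ m)) ((Finset.Icc 1 n \ I).filter (· ≤ m)) :=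
    Finset.disjoint_filter_filter (Finset.disjoint_sdiff)
  have hunion : I.filter (· ≤ m) ∪ (Finset.Icc 1 n \ I).filter (· ≤ m)
      = (Finset.Icc 1 n).filter (· ≤ m) := by
    rw [← Finset.filter_union, Finset.union_sdiff_of_subset hsub]
  have hIcc : (Finset.Icc 1 n).filter (· ≤ m) = Finset.Icc 1 m := by
    ext x
    simp only [Finset.mem_filter, Finset.mem_Icc] at *
    omega
  have := Finset.card_union_of_disjoint hdisj
  rw [hunion, hIcc, Nat.card_Icc] at this
  simp only [Finset.mem_Icc] at hm
  unfold rk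
  omega

lemma rk_pos {I : Finset ℕ} {m : ℕ} (hm : m ∈ I) : 1 ≤ rk I m :=
  Finset.card_pos.2 ⟨m, Finset.mem_filter.2 ⟨hm, le_refl m⟩⟩

lemma rk_le {n : ℕ} {I : Finset ℕ} (hsub : I ⊆ Finset.Icc 1 n) (m : ℕ) : rk I m ≤ m := by
  have h : I.filter (· ≤ m) ⊆ Finset.Icc 1 m := by
    intro x hx
    simp only [Finset.mem_filter] at hx
    have := hsub hx.1
    simp only [Finset.mem_Icc] at *
    omega
  have := Finset.card_le_card h
  rwa [Nat.card_Icc, Nat.add_sub_cancel] at this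

lemma rk_mono (I : Finset ℕ) {m m' : ℕ} (h : m ≤ m') : rk I m ≤ rk I m' := by
  refine Finset.card_le_card fun x hx => ?_
  simp only [Finset.mem_filter] at *
  exact ⟨hx.1, le_trans hx.2 h⟩

lemma lagrangeF_eq (a₁ a₂ t : ℂ) (n r : ℕ) (hr : r ≤ n) (z : ℕ → ℂ) :
    lagrangeF a₁ a₂ t n r z =
      ∑ I ∈ Finset.powersetCard r (Finset.Icc 1 n),
        ∏ m ∈ Finset.Icc 1 n, Fd a₁ a₂ t I m (z m) := by
  unfold lagrangeF
  refine Finset.sum_congr rfl fun I hI => ?_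
  obtain ⟨hsub, hcard⟩ := Finset.mem_powersetCard.1 hI
  set J := Finset.Icc 1 n \ I with hJdef
  have hJcard : J.card = n - r := by
    rw [hJdef, Finset.card_sdiff_of_subset hsub, Nat.card_Icc, hcard]
    omega
  have h1 : (∏ k ∈ Finset.range r,
      (z (sortedEl I k) - a₂ * t ^ (sortedEl I k - (k + 1))) /
        (a₁ * t ^ k - a₂ * t ^ (sortedEl I k - (k + 1))))
      = ∏ m ∈ I, Fd a₁ a₂ t I m (z m) := by
    rw [← hcard]
    calc ∏ k ∈ Finset.range I.card,
          (z (sortedEl I k) - a₂ * t ^ (sortedEl I k - (k + 1))) /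
            (a₁ * t ^ k - a₂ * t ^ (sortedEl I k - (k + 1)))
        = ∏ k ∈ Finset.range I.card,
          (fun m c => (z m - a₂ * t ^ (m - c)) / (a₁ * t ^ (c - 1) - a₂ * t ^ (m - c)))
            (sortedEl I k) (k + 1) := by
          refine Finset.prod_congr rfl fun k _ => by simp
      _ = ∏ m ∈ I,
          (z m - a₂ * t ^ (m - rk I m)) / (a₁ * t ^ (rk I m - 1) - a₂ * t ^ (m - rk I m)) :=
          prod_sortedEl I (fun m c =>
            (z m - a₂ * t ^ (m - c)) / (a₁ * t ^ (c - 1) - a₂ * t ^ (m - c)))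
      _ = ∏ m ∈ I, Fd a₁ a₂ t I m (z m) := by
          refine Finset.prod_congr rfl fun m hm => ?_
          rw [Fd, if_pos hm]
  have h2 : (∏ l ∈ Finset.range (n - r),
      (z (sortedEl J l) - a₁ * t ^ (sortedEl J l - (l + 1))) /
        (a₂ * t ^ l - a₁ * t ^ (sortedEl J l - (l + 1))))
      = ∏ m ∈ J, Fd a₁ a₂ t I m (z m) := by
    rw [← hJcard]
    calc ∏ l ∈ Finset.range J.card,
          (z (sortedEl J l) - a₁ * t ^ (sortedEl J l - (l + 1))) /
            (a₂ * t ^ l - a₁ * t ^ (sortedEl J l - (l + 1)))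
        = ∏ l ∈ Finset.range J.card,
          (fun m c => (z m - a₁ * t ^ (m - c)) / (a₂ * t ^ (c - 1) - a₁ * t ^ (m - c)))
            (sortedEl J l) (l + 1) := by
          refine Finset.prod_congr rfl fun l _ => by simp
      _ = ∏ m ∈ J,
          (z m - a₁ * t ^ (m - rk J m)) / (a₂ * t ^ (rk J m - 1) - a₁ * t ^ (m - rk J m)) :=
          prod_sortedEl J (fun m c =>
            (z m - a₁ * t ^ (m - c)) / (a₂ * t ^ (c - 1) - a₁ * t ^ (m - c)))
      _ = ∏ m ∈ J, Fd a₁ a₂ t I m (z m) := by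
          refine Finset.prod_congr rfl fun m hm => ?_
          have hmI : m ∉ I := (Finset.mem_sdiff.1 hm).2
          have hmIcc : m ∈ Finset.Icc 1 n := (Finset.mem_sdiff.1 hm).1
          have hkey : rk I m + rk J m = m := rk_add_rk_compl hsub hmIcc
          have hJpos : 1 ≤ rk J m := rk_pos (by rwa [hJdef] at hm ⊢)
          have e1 : m - rk J m = rk I m := by omega
          have e2 : rk J m - 1 = m - rk I m - 1 := by omega
          have e3 : m - rk J m = rk I m := by omega
          rw [Fd, if_neg hmI, e1, e2]
  rw [h1, h2, ← Finset.prod_sdiff hsub, ← hJdef, mul_comm]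
lemma mem_image_swap {i j x : ℕ} {I : Finset ℕ} :
    x ∈ I.image (Equiv.swap i j) ↔ (Equiv.swap i j) x ∈ I := by
  simp only [Finset.mem_image]
  constructor
  · rintro ⟨y, hy, rfl⟩
    rwa [Equiv.swap_apply_self]
  · intro h
    exact ⟨_, h, Equiv.swap_apply_self _ _ _⟩

lemma image_swap_image_swap {i j : ℕ} (I : Finset ℕ) :
    (I.image (Equiv.swap i j)).image (Equiv.swap i j) = I := by
  rw [Finset.image_image]
  have : (Equiv.swap i j) ∘ (Equiv.swap i j) = id := by
    funext x; simp [Equiv.swap_apply_self]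
  rw [this, Finset.image_id]

lemma swap_le_iff {i m x : ℕ} (hm : m ≠ i) : x ≤ m ↔ (Equiv.swap i (i+1)) x ≤ m := by
  rcases eq_or_ne x i with rfl | h1
  · rw [Equiv.swap_apply_left]; omega
  rcases eq_or_ne x (i+1) with rfl | h2
  · rw [Equiv.swap_apply_right]; omega
  · rw [Equiv.swap_apply_of_ne_of_ne h1 h2]

lemma rk_image_swap (i : ℕ) (I : Finset ℕ) {m : ℕ} (hm : m ≠ i) :
    rk (I.image (Equiv.swap i (i+1))) m = rk I m := by
  have key : (I.image (Equiv.swap i (i+1))).filter (· ≤ m)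
      = (I.filter (· ≤ m)).image (Equiv.swap i (i+1)) := by
    ext x
    simp only [Finset.mem_filter, Finset.mem_image]
    constructor
    · rintro ⟨⟨y, hy, rfl⟩, hx⟩
      exact ⟨y, ⟨hy, (swap_le_iff hm).2 hx⟩, rfl⟩
    · rintro ⟨y, ⟨hy, hym⟩, rfl⟩
      exact ⟨⟨y, hy, rfl⟩, (swap_le_iff hm).1 hym⟩
  rw [rk, key, Finset.card_image_of_injective _ (Equiv.injective _), rk]

lemma rk_succ (S : Finset ℕ) (m : ℕ) :
    rk S (m+1) = rk S m + (if m+1 ∈ S then 1 else 0) := by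
  unfold rk
  split_ifs with h
  · have hset : S.filter (· ≤ m+1) = insert (m+1) (S.filter (· ≤ m)) := by
      ext x
      simp only [Finset.mem_filter, Finset.mem_insert]
      constructor
      · rintro ⟨hx, hxm⟩
        rcases eq_or_ne x (m+1) with rfl | hne
        · exact Or.inl rfl
        · exact Or.inr ⟨hx, by omega⟩
      · rintro (rfl | ⟨hx, hxm⟩)
        · exact ⟨h, le_refl _⟩
        · exact ⟨hx, by omega⟩
    rw [hset, Finset.card_insert_of_notMem (by simp)]
  · have hset : S.filter (· ≤ m+1) = S.filter (· ≤ m) := by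
      ext x
      simp only [Finset.mem_filter]
      constructor
      · rintro ⟨hx, hxm⟩
        refine ⟨hx, ?_⟩
        rcases eq_or_ne x (m+1) with rfl | hne
        · exact absurd hx h
        · omega
      · rintro ⟨hx, hxm⟩
        exact ⟨hx, by omega⟩
    rw [hset]
    omega

lemma mem_image_swap_left {i : ℕ} {I : Finset ℕ} :
    i ∈ I.image (Equiv.swap i (i+1)) ↔ i + 1 ∈ I := by
  rw [mem_image_swap, Equiv.swap_apply_left]

lemma mem_image_swap_right {i : ℕ} {I : Finset ℕ} :
    i + 1 ∈ I.image (Equiv.swap i (i+1)) ↔ i ∈ I := by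
  rw [mem_image_swap, Equiv.swap_apply_right]

lemma mem_image_swap_other {i m : ℕ} {I : Finset ℕ} (h1 : m ≠ i) (h2 : m ≠ i+1) :
    m ∈ I.image (Equiv.swap i (i+1)) ↔ m ∈ I := by
  rw [mem_image_swap, Equiv.swap_apply_of_ne_of_ne h1 h2]
lemma key_identity (a₁ a₂ t : ℂ) (hgen : ∀ k l : ℕ, a₁ * t ^ k ≠ a₂ * t ^ l)
    (u v : ℕ) (x y : ℂ) :
    (y - a₂*t^v)/(a₁*t^u - a₂*t^v) * ((x - a₁*t^(u+1))/(a₂*t^v - a₁*t^(u+1)))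
      + (y - a₁*t^u)/(a₂*t^v - a₁*t^u) * ((x - a₂*t^(v+1))/(a₁*t^u - a₂*t^(v+1)))
  = (x - a₂*t^v)/(a₁*t^u - a₂*t^v) * ((y - a₁*t^(u+1))/(a₂*t^v - a₁*t^(u+1)))
      + (x - a₁*t^u)/(a₂*t^v - a₁*t^u) * ((y - a₂*t^(v+1))/(a₁*t^u - a₂*t^(v+1))) := by
  have d1 : a₁*t^u - a₂*t^v ≠ 0 := sub_ne_zero.2 (hgen u v)
  have d2 : a₂*t^v - a₁*t^(u+1) ≠ 0 := sub_ne_zero.2 (Ne.symm (hgen (u+1) v))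
  have d3 : a₁*t^u - a₂*t^(v+1) ≠ 0 := sub_ne_zero.2 (hgen u (v+1))
  have d4 : a₂*t^v - a₁*t^u ≠ 0 := sub_ne_zero.2 (Ne.symm (hgen u v))
  field_simp
  ring

lemma both_case (a₁ a₂ t : ℂ) (i : ℕ) {I : Finset ℕ} (h : i ∈ I ↔ i + 1 ∈ I) (x y : ℂ) :
    Fd a₁ a₂ t I i x * Fd a₁ a₂ t I (i+1) y = Fd a₁ a₂ t I i y * Fd a₁ a₂ t I (i+1) x := by
  by_cases hi : i ∈ I
  · have hi1 : i + 1 ∈ I := h.1 hi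
    have hc : rk I (i+1) = rk I i + 1 := by rw [rk_succ, if_pos hi1]
    have e1 : ∀ w : ℂ, Fd a₁ a₂ t I i w
        = (w - a₂ * t ^ (i - rk I i)) / (a₁ * t ^ (rk I i - 1) - a₂ * t ^ (i - rk I i)) := by
      intro w; rw [Fd, if_pos hi]
    have e2 : ∀ w : ℂ, Fd a₁ a₂ t I (i+1) w
        = (w - a₂ * t ^ (i - rk I i)) / (a₁ * t ^ (rk I i) - a₂ * t ^ (i - rk I i)) := by
      intro w
      rw [Fd, if_pos hi1, hc, show i + 1 - (rk I i + 1) = i - rk I i from by omega,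
        Nat.add_sub_cancel]
    rw [e1 x, e1 y, e2 x, e2 y]; ring
  · have hi1 : i + 1 ∉ I := fun h' => hi (h.2 h')
    have hc : rk I (i+1) = rk I i := by rw [rk_succ, if_neg hi1]; omega
    have e1 : ∀ w : ℂ, Fd a₁ a₂ t I i w
        = (w - a₁ * t ^ (rk I i)) / (a₂ * t ^ (i - rk I i - 1) - a₁ * t ^ (rk I i)) := by
      intro w; rw [Fd, if_neg hi]
    have e2 : ∀ w : ℂ, Fd a₁ a₂ t I (i+1) w
        = (w - a₁ * t ^ (rk I i)) / (a₂ * t ^ (i - rk I i) - a₁ * t ^ (rk I i)) := by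
      intro w
      rw [Fd, if_neg hi1, hc, show i + 1 - rk I i - 1 = i - rk I i from by omega]
    rw [e1 x, e1 y, e2 x, e2 y]; ring

lemma Fd_image_other (a₁ a₂ t : ℂ) (i : ℕ) (I : Finset ℕ) {m : ℕ}
    (h1 : m ≠ i) (h2 : m ≠ i+1) (x : ℂ) :
    Fd a₁ a₂ t (I.image (Equiv.swap i (i+1))) m x = Fd a₁ a₂ t I m x := by
  unfold Fd
  rw [rk_image_swap i I h1]
  by_cases hm : m ∈ I
  · rw [if_pos hm, if_pos ((mem_image_swap_other h1 h2).2 hm)]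
  · rw [if_neg hm, if_neg (fun h => hm ((mem_image_swap_other h1 h2).1 h))]

lemma pair_sum (a₁ a₂ t : ℂ) (hgen : ∀ k l : ℕ, a₁ * t ^ k ≠ a₂ * t ^ l)
    (n i : ℕ) {I : Finset ℕ} (hI : I ⊆ Finset.Icc 1 n) (hi : i ∈ I) (hi1 : i + 1 ∉ I)
    (x y : ℂ) :
    Fd a₁ a₂ t I i y * Fd a₁ a₂ t I (i+1) x
      + Fd a₁ a₂ t (I.image (Equiv.swap i (i+1))) i y
        * Fd a₁ a₂ t (I.image (Equiv.swap i (i+1))) (i+1) x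
  = Fd a₁ a₂ t I i x * Fd a₁ a₂ t I (i+1) y
      + Fd a₁ a₂ t (I.image (Equiv.swap i (i+1))) i x
        * Fd a₁ a₂ t (I.image (Equiv.swap i (i+1))) (i+1) y := by
  set I' := I.image (Equiv.swap i (i+1)) with hI'
  have hc1 : 1 ≤ rk I i := rk_pos hi
  have hci : rk I i ≤ i := rk_le hI i
  obtain ⟨u, hu⟩ : ∃ u, rk I i = u + 1 := ⟨rk I i - 1, by omega⟩
  obtain ⟨v, hv⟩ : ∃ v, i = u + 1 + v := ⟨i - rk I i, by omega⟩
  have hrk1 : rk I (i+1) = u + 1 := by rw [rk_succ, if_neg hi1, hu]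
  have hmi' : i ∉ I' := by rw [hI', mem_image_swap_left]; exact hi1
  have hmi1' : i + 1 ∈ I' := by rw [hI', mem_image_swap_right]; exact hi
  have hrk1' : rk I' (i+1) = u + 1 := by rw [hI', rk_image_swap i I (by omega)]; exact hrk1
  have hrk0' : rk I' i = u := by
    have h := rk_succ I' i
    rw [if_pos hmi1', hrk1'] at h
    omega
  have eA : ∀ w : ℂ, Fd a₁ a₂ t I i w = (w - a₂ * t ^ v) / (a₁ * t ^ u - a₂ * t ^ v) := by
    intro w
    rw [Fd, if_pos hi, hu, show i - (u+1) = v from by omega, Nat.add_sub_cancel]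
  have eB : ∀ w : ℂ, Fd a₁ a₂ t I (i+1) w
      = (w - a₁ * t ^ (u+1)) / (a₂ * t ^ v - a₁ * t ^ (u+1)) := by
    intro w
    rw [Fd, if_neg hi1, hrk1, show i + 1 - (u+1) - 1 = v from by omega]
  have eC : ∀ w : ℂ, Fd a₁ a₂ t I' i w = (w - a₁ * t ^ u) / (a₂ * t ^ v - a₁ * t ^ u) := by
    intro w
    rw [Fd, if_neg hmi', hrk0', show i - u - 1 = v from by omega]
  have eD : ∀ w : ℂ, Fd a₁ a₂ t I' (i+1) w
      = (w - a₂ * t ^ (v+1)) / (a₁ * t ^ u - a₂ * t ^ (v+1)) := by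
    intro w
    rw [Fd, if_pos hmi1', hrk1', show i + 1 - (u+1) = v + 1 from by omega, Nat.add_sub_cancel]
  rw [eA x, eA y, eB x, eB y, eC x, eC y, eD x, eD y]
  exact key_identity a₁ a₂ t hgen u v x y
lemma sum_swap_adj (a₁ a₂ t : ℂ) (hgen : ∀ k l : ℕ, a₁ * t ^ k ≠ a₂ * t ^ l)
    (n r i : ℕ) (hi1 : 1 ≤ i) (hin : i + 1 ≤ n) (z : ℕ → ℂ) :
    ∑ I ∈ Finset.powersetCard r (Finset.Icc 1 n),
        ∏ m ∈ Finset.Icc 1 n, Fd a₁ a₂ t I m (z (Equiv.swap i (i+1) m))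
  = ∑ I ∈ Finset.powersetCard r (Finset.Icc 1 n),
        ∏ m ∈ Finset.Icc 1 n, Fd a₁ a₂ t I m (z m) := by
  set S := Finset.powersetCard r (Finset.Icc 1 n) with hS
  set g : Finset ℕ → ℂ :=
    fun I => ∏ m ∈ Finset.Icc 1 n, Fd a₁ a₂ t I m (z (Equiv.swap i (i+1) m)) with hgdef
  set f : Finset ℕ → ℂ := fun I => ∏ m ∈ Finset.Icc 1 n, Fd a₁ a₂ t I m (z m) with hfdef
  have himem : i ∈ Finset.Icc 1 n := Finset.mem_Icc.2 (by omega)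
  have hi1mem : i + 1 ∈ (Finset.Icc 1 n).erase i :=
    Finset.mem_erase.2 ⟨by omega, Finset.mem_Icc.2 (by omega)⟩
  set R := ((Finset.Icc 1 n).erase i).erase (i+1) with hRdef
  have hRne : ∀ m ∈ R, m ≠ i ∧ m ≠ i + 1 := by
    intro m hm
    have h1 := Finset.mem_erase.1 hm
    have h2 := Finset.mem_erase.1 h1.2
    exact ⟨h2.1, h1.1⟩
  have hsplit : ∀ (K : Finset ℕ) (w : ℕ → ℂ),
      ∏ m ∈ Finset.Icc 1 n, Fd a₁ a₂ t K m (w m)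
        = Fd a₁ a₂ t K i (w i) *
            (Fd a₁ a₂ t K (i+1) (w (i+1)) * ∏ m ∈ R, Fd a₁ a₂ t K m (w m)) := by
    intro K w
    rw [← Finset.mul_prod_erase _ _ himem, ← Finset.mul_prod_erase _ _ hi1mem]
  have hswIcc : ∀ x ∈ Finset.Icc 1 n, Equiv.swap i (i+1) x ∈ Finset.Icc 1 n := by
    intro x hx
    rcases eq_or_ne x i with rfl | h1
    · rw [Equiv.swap_apply_left]; exact Finset.mem_Icc.2 (by omega)
    rcases eq_or_ne x (i+1) with rfl | h2
    · rw [Equiv.swap_apply_right]; exact himem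
    · rwa [Equiv.swap_apply_of_ne_of_ne h1 h2]
  have hΨmem : ∀ I ∈ S, I.image (Equiv.swap i (i+1)) ∈ S := by
    intro I hI
    obtain ⟨hsub, hcard⟩ := Finset.mem_powersetCard.1 hI
    refine Finset.mem_powersetCard.2 ⟨?_, ?_⟩
    · intro x hx
      obtain ⟨y, hy, rfl⟩ := Finset.mem_image.1 hx
      exact hswIcc y (hsub hy)
    · rw [Finset.card_image_of_injective _ (Equiv.injective _), hcard]
  have hΨΨ : ∀ I : Finset ℕ,
      (I.image (Equiv.swap i (i+1))).image (Equiv.swap i (i+1)) = I :=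
    fun I => image_swap_image_swap I
  have hzsw : ∀ m ∈ R, z (Equiv.swap i (i+1) m) = z m := by
    intro m hm
    obtain ⟨h1, h2⟩ := hRne m hm
    rw [Equiv.swap_apply_of_ne_of_ne h1 h2]
  have hPz : ∀ K : Finset ℕ,
      ∏ m ∈ R, Fd a₁ a₂ t K m (z (Equiv.swap i (i+1) m)) = ∏ m ∈ R, Fd a₁ a₂ t K m (z m) :=
    fun K => Finset.prod_congr rfl fun m hm => by rw [hzsw m hm]
  have main : ∀ J, J ⊆ Finset.Icc 1 n → i ∈ J → i + 1 ∉ J →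
      g J + g (J.image (Equiv.swap i (i+1))) = f J + f (J.image (Equiv.swap i (i+1))) := by
    intro J hsub hiJ hi1J
    have hPim : ∏ m ∈ R, Fd a₁ a₂ t (J.image (Equiv.swap i (i+1))) m (z m)
        = ∏ m ∈ R, Fd a₁ a₂ t J m (z m) := by
      refine Finset.prod_congr rfl fun m hm => ?_
      obtain ⟨h1, h2⟩ := hRne m hm
      exact Fd_image_other a₁ a₂ t i J h1 h2 _
    have hps := pair_sum a₁ a₂ t hgen n i hsub hiJ hi1J (z i) (z (i+1))
    show (∏ m ∈ Finset.Icc 1 n, Fd a₁ a₂ t J m (z (Equiv.swap i (i+1) m)))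
        + (∏ m ∈ Finset.Icc 1 n,
            Fd a₁ a₂ t (J.image (Equiv.swap i (i+1))) m (z (Equiv.swap i (i+1) m)))
      = (∏ m ∈ Finset.Icc 1 n, Fd a₁ a₂ t J m (z m))
        + (∏ m ∈ Finset.Icc 1 n, Fd a₁ a₂ t (J.image (Equiv.swap i (i+1))) m (z m))
    rw [hsplit J, hsplit (J.image (Equiv.swap i (i+1))), hsplit J,
      hsplit (J.image (Equiv.swap i (i+1)))]
    simp only [Equiv.swap_apply_left, Equiv.swap_apply_right]
    rw [hPz J, hPz (J.image (Equiv.swap i (i+1))), hPim]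
    linear_combination (∏ m ∈ R, Fd a₁ a₂ t J m (z m)) * hps
  have hpoint : ∀ I ∈ S, g I + g (I.image (Equiv.swap i (i+1)))
      = f I + f (I.image (Equiv.swap i (i+1))) := by
    intro I hI
    obtain ⟨hsub, hcard⟩ := Finset.mem_powersetCard.1 hI
    by_cases hii : (i ∈ I ↔ i + 1 ∈ I)
    · have hΨI : I.image (Equiv.swap i (i+1)) = I := by
        ext x
        rw [mem_image_swap]
        rcases eq_or_ne x i with rfl | h1
        · rw [Equiv.swap_apply_left]
          exact Iff.comm.1 hii
        rcases eq_or_ne x (i+1) with rfl | h2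
        · rw [Equiv.swap_apply_right]
          exact hii
        · rw [Equiv.swap_apply_of_ne_of_ne h1 h2]
      rw [hΨI]
      have hgf : g I = f I := by
        show (∏ m ∈ Finset.Icc 1 n, Fd a₁ a₂ t I m (z (Equiv.swap i (i+1) m)))
          = ∏ m ∈ Finset.Icc 1 n, Fd a₁ a₂ t I m (z m)
        rw [hsplit I, hsplit I]
        simp only [Equiv.swap_apply_left, Equiv.swap_apply_right]
        rw [hPz I, ← mul_assoc, ← mul_assoc, both_case a₁ a₂ t i hii (z (i+1)) (z i)]
      rw [hgf]
    · have hxor : (i ∈ I ∧ i + 1 ∉ I) ∨ (i ∉ I ∧ i + 1 ∈ I) := by tauto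
      rcases hxor with ⟨h1, h2⟩ | ⟨h1, h2⟩
      · exact main I hsub h1 h2
      · have h1' : i ∈ I.image (Equiv.swap i (i+1)) := mem_image_swap_left.2 h2
        have h2' : i + 1 ∉ I.image (Equiv.swap i (i+1)) :=
          fun h => h1 (mem_image_swap_right.1 h)
        have hsub' : I.image (Equiv.swap i (i+1)) ⊆ Finset.Icc 1 n := by
          intro x hx
          obtain ⟨y, hy, rfl⟩ := Finset.mem_image.1 hx
          exact hswIcc y (hsub hy)
        have hmain := main (I.image (Equiv.swap i (i+1))) hsub' h1' h2'
        rw [hΨΨ I] at hmain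
        linear_combination hmain
  have h1 : ∑ I ∈ S, g (I.image (Equiv.swap i (i+1))) = ∑ I ∈ S, g I :=
    Finset.sum_nbij' (fun I => I.image (Equiv.swap i (i+1)))
      (fun I => I.image (Equiv.swap i (i+1)))
      hΨmem hΨmem (fun I _ => hΨΨ I) (fun I _ => hΨΨ I) (fun I _ => rfl)
  have h2 : ∑ I ∈ S, f (I.image (Equiv.swap i (i+1))) = ∑ I ∈ S, f I :=
    Finset.sum_nbij' (fun I => I.image (Equiv.swap i (i+1)))
      (fun I => I.image (Equiv.swap i (i+1)))
      hΨmem hΨmem (fun I _ => hΨΨ I) (fun I _ => hΨΨ I) (fun I _ => rfl)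
  have h3 : (∑ I ∈ S, g I) + (∑ I ∈ S, g I) = (∑ I ∈ S, f I) + (∑ I ∈ S, f I) := by
    calc (∑ I ∈ S, g I) + (∑ I ∈ S, g I)
        = (∑ I ∈ S, g I) + (∑ I ∈ S, g (I.image (Equiv.swap i (i+1)))) := by rw [h1]
      _ = ∑ I ∈ S, (g I + g (I.image (Equiv.swap i (i+1)))) := Finset.sum_add_distrib.symm
      _ = ∑ I ∈ S, (f I + f (I.image (Equiv.swap i (i+1)))) := Finset.sum_congr rfl hpoint
      _ = (∑ I ∈ S, f I) + (∑ I ∈ S, f (I.image (Equiv.swap i (i+1)))) :=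
          Finset.sum_add_distrib
      _ = (∑ I ∈ S, f I) + (∑ I ∈ S, f I) := by rw [h2]
  show ∑ I ∈ S, g I = ∑ I ∈ S, f I
  have h2ne : (2 : ℂ) ≠ 0 := two_ne_zero
  apply mul_left_cancel₀ h2ne
  rw [two_mul, two_mul]
  exact h3
lemma swap_decomp (a d : ℕ) :
    Equiv.swap a (a + d + 2) =
      Equiv.swap a (a+1) * Equiv.swap (a+1) (a + d + 2) * Equiv.swap a (a+1) := by
  ext k
  simp only [Equiv.Perm.mul_apply, Equiv.swap_apply_def]
  split_ifs <;> omega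

lemma lagrangeF_swap_adj (a₁ a₂ t : ℂ) (hgen : ∀ k l : ℕ, a₁ * t ^ k ≠ a₂ * t ^ l)
    (n r : ℕ) (hr : r ≤ n) (i : ℕ) (hi1 : 1 ≤ i) (hin : i + 1 ≤ n) (z : ℕ → ℂ) :
    lagrangeF a₁ a₂ t n r (fun k => z (Equiv.swap i (i+1) k)) = lagrangeF a₁ a₂ t n r z := by
  rw [lagrangeF_eq a₁ a₂ t n r hr, lagrangeF_eq a₁ a₂ t n r hr]
  exact sum_swap_adj a₁ a₂ t hgen n r i hi1 hin z

lemma Q_mul (a₁ a₂ t : ℂ) (n r : ℕ) (σ τ : Equiv.Perm ℕ)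
    (hσ : ∀ w : ℕ → ℂ, lagrangeF a₁ a₂ t n r (fun k => w (σ k)) = lagrangeF a₁ a₂ t n r w)
    (hτ : ∀ w : ℕ → ℂ, lagrangeF a₁ a₂ t n r (fun k => w (τ k)) = lagrangeF a₁ a₂ t n r w)
    (w : ℕ → ℂ) :
    lagrangeF a₁ a₂ t n r (fun k => w ((σ * τ) k)) = lagrangeF a₁ a₂ t n r w := by
  have h : (fun k => w ((σ * τ) k)) = (fun k => (fun j => w (σ j)) (τ k)) := rfl
  rw [h, hτ (fun j => w (σ j)), hσ w]

lemma Q_swap_gap (a₁ a₂ t : ℂ) (hgen : ∀ k l : ℕ, a₁ * t ^ k ≠ a₂ * t ^ l)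
    (n r : ℕ) (hr : r ≤ n) :
    ∀ d a, 1 ≤ a → a + d + 1 ≤ n →
      ∀ w : ℕ → ℂ, lagrangeF a₁ a₂ t n r (fun k => w (Equiv.swap a (a + d + 1) k))
        = lagrangeF a₁ a₂ t n r w := by
  intro d
  induction d with
  | zero => exact fun a ha hb w => lagrangeF_swap_adj a₁ a₂ t hgen n r hr a ha hb w
  | succ d ih =>
    intro a ha hb w
    rw [show a + (d+1) + 1 = a + d + 2 from by omega, swap_decomp a d]
    have hadj : ∀ w' : ℕ → ℂ,
        lagrangeF a₁ a₂ t n r (fun k => w' (Equiv.swap a (a+1) k))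
          = lagrangeF a₁ a₂ t n r w' :=
      fun w' => lagrangeF_swap_adj a₁ a₂ t hgen n r hr a ha (by omega) w'
    have hmid : ∀ w' : ℕ → ℂ,
        lagrangeF a₁ a₂ t n r (fun k => w' (Equiv.swap (a+1) (a + d + 2) k))
          = lagrangeF a₁ a₂ t n r w' := by
      intro w'
      have h := ih (a+1) (by omega) (by omega) w'
      rwa [show (a+1) + d + 1 = a + d + 2 from by omega] at h
    exact Q_mul a₁ a₂ t n r _ _
      (fun w' => Q_mul a₁ a₂ t n r _ _ hadj hmid w') hadj w

lemma Q_swap_any (a₁ a₂ t : ℂ) (hgen : ∀ k l : ℕ, a₁ * t ^ k ≠ a₂ * t ^ l)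
    (n r : ℕ) (hr : r ≤ n) (x y : ℕ) (hxy : x ≠ y)
    (hx : x ∈ Finset.Icc 1 n) (hy : y ∈ Finset.Icc 1 n) (w : ℕ → ℂ) :
    lagrangeF a₁ a₂ t n r (fun k => w (Equiv.swap x y k)) = lagrangeF a₁ a₂ t n r w := by
  simp only [Finset.mem_Icc] at hx hy
  rcases Nat.lt_or_ge x y with h | h
  · have hq := Q_swap_gap a₁ a₂ t hgen n r hr (y - x - 1) x (by omega) (by omega) w
    rwa [show x + (y - x - 1) + 1 = y from by omega] at hq
  · have hyx : y < x := by omega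
    have hq := Q_swap_gap a₁ a₂ t hgen n r hr (x - y - 1) y (by omega) (by omega) w
    rw [show y + (x - y - 1) + 1 = x from by omega] at hq
    rwa [Equiv.swap_comm] at hq

/-- Each Lagrange interpolation polynomial of type A is symmetric in z₁,…,z_n. -/
theorem lagrange_symmetric (n r : ℕ) (hr : r ≤ n) (a₁ a₂ t : ℂ)
    (ha₁ : a₁ ≠ 0) (ha₂ : a₂ ≠ 0) (ht : t ≠ 0)
    (hgen : ∀ k l : ℕ, a₁ * t ^ k ≠ a₂ * t ^ l)
    (σ : Equiv.Perm ℕ) (hσ : ∀ k ∈ Finset.Icc 1 n, σ k ∈ Finset.Icc 1 n) (z : ℕ → ℂ) :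
    lagrangeF a₁ a₂ t n r (fun k => z (σ k)) = lagrangeF a₁ a₂ t n r z := by
  have himage : (Finset.Icc 1 n).image σ = Finset.Icc 1 n := by
    apply Finset.eq_of_subset_of_card_le
    · intro x hx
      obtain ⟨y, hy, rfl⟩ := Finset.mem_image.1 hx
      exact hσ y hy
    · rw [Finset.card_image_of_injective _ σ.injective]
  have hmemiff : ∀ x, x ∈ Finset.Icc 1 n ↔ σ x ∈ Finset.Icc 1 n := by
    intro x
    constructor
    · exact hσ x
    · intro hx
      rw [← himage] at hx
      obtain ⟨y, hy, hxy⟩ := Finset.mem_image.1 hx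
      rwa [← σ.injective hxy]
  have hQ : ∀ π : Equiv.Perm {x // x ∈ Finset.Icc 1 n}, ∀ w : ℕ → ℂ,
      lagrangeF a₁ a₂ t n r (fun k => w ((Equiv.Perm.ofSubtype π) k))
        = lagrangeF a₁ a₂ t n r w := by
    intro π
    refine Equiv.Perm.swap_induction_on π ?_ ?_
    · intro w
      simp only [map_one, Equiv.Perm.one_apply]
    · intro f x y hxy ih w
      rw [map_mul, Equiv.Perm.ofSubtype_swap_eq]
      exact Q_mul a₁ a₂ t n r _ _
        (fun w' => Q_swap_any a₁ a₂ t hgen n r hr x.1 y.1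
          (fun h => hxy (Subtype.ext h)) x.2 y.2 w') ih w
  have hagree : lagrangeF a₁ a₂ t n r (fun k => z (σ k))
      = lagrangeF a₁ a₂ t n r (fun k =>
          z ((Equiv.Perm.ofSubtype (σ.subtypePerm (fun x => (hmemiff x).symm))) k)) := by
    rw [lagrangeF_eq a₁ a₂ t n r hr, lagrangeF_eq a₁ a₂ t n r hr]
    refine Finset.sum_congr rfl fun I hI => Finset.prod_congr rfl fun m hm => ?_
    rw [Equiv.Perm.ofSubtype_apply_of_mem (σ.subtypePerm (fun x => (hmemiff x).symm)) hm]
    rfl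
  rw [hagree]
  exact hQ (σ.subtypePerm (fun x => (hmemiff x).symm)) z
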